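/- Let d ≥ 2 be an integer, n a positive integer, t₀ > 0, t > 0 and x̂ > 0 real numbers. Set ω = e^{2πi/(d+1)} and α = e^{iπ/(d+1)}. For a polynomial g ∈ ℂ[X], let ḡ denote the polynomial obtained from g by conjugating its coefficients. For polynomials f, g ∈ ℂ[X] define the sesquilinear form ⟨f, g⟩ = ∑_{ℓ=0}^{d} ∫_0^{x̂} ∫_0^∞ f(ω^ℓ x) · [ α·ḡ(ω^{−ℓ}·α·u)·exp( −(n/t₀)·( α·u·x + t·u^{d+1}/(d+1) − t·x^{d+1}/(d+1) ) ) − α^{−1}·ḡ(ω^{−ℓ}·α^{−1}·u)·exp( −(n/t₀)·( α^{−1}·u·x + t·u^{d+1}/(d+1) − t·x^{d+1}/(d+1) ) ) ] du dx. Then for all f, g ∈ ℂ[X]: t₀·⟨f, g′⟩ − n·⟨X·f, g⟩ + n·t·⟨f, X^d·g⟩ = 0, where g′ is the derivative of g and X·f, X^d·g denote multiplication by the monomials X and X^d. -/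

import Mathlib

open MeasureTheory Polynomial

/-- `ω = e^{2πi/(d+1)}`. -/
noncomputable def omC (d : ℕ) : ℂ := Complex.exp (2 * Real.pi * Complex.I / ((d : ℂ) + 1))

/-- `α = e^{iπ/(d+1)}`. -/
noncomputable def alphaC (d : ℕ) : ℂ := Complex.exp (Real.pi * Complex.I / ((d : ℂ) + 1))

open Filter Set

/-- elementary exponent bound -/
lemma expBound (s κ : ℝ) (hκ : 0 < κ) (hs : 0 ≤ s) (m : ℕ) (hm : 1 ≤ m) (u : ℝ) (hu : 0 ≤ u) :
    s * u - κ * u ^ (m + 1) ≤ s * max 1 (s / κ) := by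
  set R : ℝ := max 1 (s / κ) with hR
  have hR0 : 0 ≤ R := le_trans zero_le_one (le_max_left _ _)
  rcases le_total u R with h | h
  · have : s * u ≤ s * R := mul_le_mul_of_nonneg_left h hs
    nlinarith [pow_nonneg hu (m + 1), mul_nonneg hκ.le (pow_nonneg hu (m + 1))]
  · have h1 : (1 : ℝ) ≤ u := le_trans (le_max_left _ _) h
    have h2 : s / κ ≤ u := le_trans (le_max_right _ _) h
    have h3 : u ≤ u ^ m := le_self_pow₀ h1 (by omega)
    have h4 : s ≤ κ * u ^ m := by
      rw [div_le_iff₀ hκ] at h2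
      nlinarith
    have h5 : s * u ≤ κ * u ^ m * u := mul_le_mul_of_nonneg_right h4 hu
    have h6 : κ * u ^ m * u = κ * u ^ (m + 1) := by ring
    have h7 : 0 ≤ s * R := mul_nonneg hs hR0
    nlinarith

/-- polynomial growth bound -/
lemma polyBound (P : Polynomial ℂ) (b : ℂ) :
    ∃ C : ℝ, 0 ≤ C ∧ ∀ u : ℝ, 0 ≤ u →
      ‖P.eval (b * u)‖ ≤ C * Real.exp ((P.natDegree : ℝ) * u) := by
  refine ⟨∑ i ∈ Finset.range (P.natDegree + 1), ‖P.coeff i‖ * ‖b‖ ^ i,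
    Finset.sum_nonneg fun i _ => mul_nonneg (norm_nonneg _) (pow_nonneg (norm_nonneg _) _), ?_⟩
  intro u hu
  rw [Finset.sum_mul]
  calc ‖P.eval (b * u)‖
      = ‖∑ i ∈ Finset.range (P.natDegree + 1), P.coeff i * (b * u) ^ i‖ := by
        rw [Polynomial.eval_eq_sum_range]
    _ ≤ ∑ i ∈ Finset.range (P.natDegree + 1), ‖P.coeff i * (b * u) ^ i‖ :=
        norm_sum_le _ _
    _ ≤ ∑ i ∈ Finset.range (P.natDegree + 1),
          ‖P.coeff i‖ * ‖b‖ ^ i * Real.exp ((P.natDegree : ℝ) * u) := by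
        refine Finset.sum_le_sum fun i hi => ?_
        rw [norm_mul, norm_pow, norm_mul, mul_pow]
        have hnu : ‖(u : ℂ)‖ = u := by
          rw [Complex.norm_real, Real.norm_eq_abs, abs_of_nonneg hu]
        rw [hnu]
        have h1 : u ^ i ≤ Real.exp ((P.natDegree : ℝ) * u) := by
          have hue : u ≤ Real.exp u := (Real.add_one_le_exp u).trans' (by linarith)
          calc u ^ i ≤ Real.exp u ^ i := pow_le_pow_left₀ hu hue i
            _ = Real.exp (i * u) := by rw [← Real.exp_nat_mul]
            _ ≤ Real.exp ((P.natDegree : ℝ) * u) := by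
                apply Real.exp_le_exp.2
                have : (i : ℝ) ≤ (P.natDegree : ℝ) := by
                  exact_mod_cast Nat.lt_succ_iff.1 (Finset.mem_range.1 hi)
                nlinarith
        calc ‖P.coeff i‖ * (‖b‖ ^ i * u ^ i) ≤ ‖P.coeff i‖ * (‖b‖ ^ i * Real.exp ((P.natDegree : ℝ) * u)) := by
              have := mul_le_mul_of_nonneg_left h1 (pow_nonneg (norm_nonneg b) i)
              exact mul_le_mul_of_nonneg_left this (norm_nonneg _)
          _ = ‖P.coeff i‖ * ‖b‖ ^ i * Real.exp ((P.natDegree : ℝ) * u) := by ring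

/-- the exponential kernel -/
noncomputable def kerE (d n : ℕ) (t₀ t : ℝ) (a : ℂ) (x u : ℝ) : ℂ :=
  Complex.exp (-((n : ℂ) / (t₀ : ℂ)) *
    (a * (u : ℂ) * (x : ℂ) + (t : ℂ) * (u : ℂ) ^ (d + 1) / ((d : ℂ) + 1)
      - (t : ℂ) * (x : ℂ) ^ (d + 1) / ((d : ℂ) + 1)))

lemma kerE_norm (d n : ℕ) (t₀ t : ℝ) (a : ℂ) (x u : ℝ) :
    ‖kerE d n t₀ t a x u‖ =
      Real.exp (-((n : ℝ) / t₀) * a.re * u * x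
        - (n : ℝ) / t₀ * t * u ^ (d + 1) / ((d : ℝ) + 1)
        + (n : ℝ) / t₀ * t * x ^ (d + 1) / ((d : ℝ) + 1)) := by
  rw [kerE, Complex.norm_exp]
  congr 1
  have h : -((n : ℂ) / (t₀ : ℂ)) *
      (a * (u : ℂ) * (x : ℂ) + (t : ℂ) * (u : ℂ) ^ (d + 1) / ((d : ℂ) + 1)
        - (t : ℂ) * (x : ℂ) ^ (d + 1) / ((d : ℂ) + 1))
      = ((-((n : ℝ) / t₀) * u * x : ℝ) : ℂ) * a
        + ((-((n : ℝ) / t₀ * t * u ^ (d + 1) / ((d : ℝ) + 1))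
            + (n : ℝ) / t₀ * t * x ^ (d + 1) / ((d : ℝ) + 1) : ℝ) : ℂ) := by
    push_cast
    ring
  rw [h, Complex.add_re, Complex.re_ofReal_mul, Complex.ofReal_re]
  ring

lemma kernel_bound (d n : ℕ) (hd : 1 ≤ d) (hn : 0 < n) (t₀ t : ℝ) (ht₀ : 0 < t₀) (ht : 0 < t)
    (P : Polynomial ℂ) (b a : ℂ) (M : ℝ) (hM : 0 ≤ M) :
    ∃ C : ℝ, 0 ≤ C ∧ ∀ x : ℝ, |x| ≤ M → ∀ u : ℝ, 0 ≤ u →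
      ‖P.eval (b * u) * kerE d n t₀ t a x u‖ ≤ C * Real.exp (-u) := by
  obtain ⟨Cp, hCp0, hCp⟩ := polyBound P b
  set c : ℝ := (n : ℝ) / t₀ with hcdef
  have hc : 0 < c := div_pos (by exact_mod_cast hn) ht₀
  set κ : ℝ := c * t / ((d : ℝ) + 1) with hκdef
  have hdpos : (0 : ℝ) < (d : ℝ) + 1 := by positivity
  have hκ : 0 < κ := by positivity
  set s : ℝ := (P.natDegree : ℝ) + c * |a.re| * M + 1 with hsdef
  have hs : 0 ≤ s := by positivity
  set K : ℝ := c * t * M ^ (d + 1) / ((d : ℝ) + 1) with hKdef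
  refine ⟨Cp * Real.exp (s * max 1 (s / κ) + K), by positivity, ?_⟩
  intro x hx u hu
  rw [norm_mul, kerE_norm]
  have hxd : x ^ (d + 1) ≤ M ^ (d + 1) := by
    calc x ^ (d + 1) ≤ |x| ^ (d + 1) := by
          rw [← abs_pow]; exact le_abs_self _
      _ ≤ M ^ (d + 1) := pow_le_pow_left₀ (abs_nonneg x) hx (d + 1)
  have h2 : c * t * x ^ (d + 1) / ((d : ℝ) + 1) ≤ K := by
    rw [hKdef]
    gcongr
  have h1 : -c * a.re * u * x ≤ c * |a.re| * M * u := by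
    have e1 : -c * a.re * u * x ≤ |c * a.re * u * x| := by
      have := neg_abs_le (c * a.re * u * x)
      have := le_abs_self (c * a.re * u * x)
      rcases le_total (c * a.re * u * x) 0 with h | h <;> nlinarith [abs_nonneg (c * a.re * u * x)]
    have e2 : |c * a.re * u * x| = c * |a.re| * u * |x| := by
      rw [abs_mul, abs_mul, abs_mul, abs_of_nonneg hc.le, abs_of_nonneg hu]
    have e3 : c * |a.re| * u * |x| ≤ c * |a.re| * u * M :=
      mul_le_mul_of_nonneg_left hx (by positivity)
    nlinarith
  have hE := expBound s κ hκ hs d hd u hu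
  have hκu : c * t * u ^ (d + 1) / ((d : ℝ) + 1) = κ * u ^ (d + 1) := by
    rw [hκdef]; ring
  calc ‖P.eval (b * u)‖ *
        Real.exp (-c * a.re * u * x - c * t * u ^ (d + 1) / ((d : ℝ) + 1)
          + c * t * x ^ (d + 1) / ((d : ℝ) + 1))
      ≤ (Cp * Real.exp ((P.natDegree : ℝ) * u)) *
        Real.exp (-c * a.re * u * x - c * t * u ^ (d + 1) / ((d : ℝ) + 1)
          + c * t * x ^ (d + 1) / ((d : ℝ) + 1)) :=
        mul_le_mul_of_nonneg_right (hCp u hu) (Real.exp_pos _).le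
    _ = Cp * Real.exp ((P.natDegree : ℝ) * u
          + (-c * a.re * u * x - c * t * u ^ (d + 1) / ((d : ℝ) + 1)
            + c * t * x ^ (d + 1) / ((d : ℝ) + 1))) := by
        rw [mul_assoc, ← Real.exp_add]
    _ ≤ Cp * Real.exp (s * max 1 (s / κ) + K + -u) := by
        have : (P.natDegree : ℝ) * u
            + (-c * a.re * u * x - c * t * u ^ (d + 1) / ((d : ℝ) + 1)
              + c * t * x ^ (d + 1) / ((d : ℝ) + 1))
            ≤ s * max 1 (s / κ) + K + -u := by
          rw [hκu]
          have hsu : s * u = (P.natDegree : ℝ) * u + c * |a.re| * M * u + u := by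
            rw [hsdef]; ring
          linarith
        exact mul_le_mul_of_nonneg_left (Real.exp_le_exp.2 this) hCp0
    _ = Cp * Real.exp (s * max 1 (s / κ) + K) * Real.exp (-u) := by
        rw [Real.exp_add, mul_assoc]

lemma kernel_cont (d n : ℕ) (t₀ t : ℝ) (P : Polynomial ℂ) (b a : ℂ) :
    Continuous fun p : ℝ × ℝ => P.eval (b * p.2) * kerE d n t₀ t a p.1 p.2 := by
  unfold kerE
  have h1 : Continuous fun p : ℝ × ℝ => ((p.1 : ℝ) : ℂ) :=
    Complex.continuous_ofReal.comp continuous_fst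
  have h2 : Continuous fun p : ℝ × ℝ => ((p.2 : ℝ) : ℂ) :=
    Complex.continuous_ofReal.comp continuous_snd
  exact (P.continuous.comp (continuous_const.mul h2)).mul
    (Complex.continuous_exp.comp (by continuity))

lemma kernel_integrableOn (d n : ℕ) (hd : 1 ≤ d) (hn : 0 < n) (t₀ t : ℝ)
    (ht₀ : 0 < t₀) (ht : 0 < t) (P : Polynomial ℂ) (b a : ℂ) (x : ℝ) :
    IntegrableOn (fun u : ℝ => P.eval (b * u) * kerE d n t₀ t a x u) (Set.Ioi (0:ℝ)) := by
  obtain ⟨C, hC0, hC⟩ := kernel_bound d n hd hn t₀ t ht₀ ht P b a |x| (abs_nonneg x)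
  have hg : IntegrableOn (fun u : ℝ => C * Real.exp (-u)) (Set.Ioi (0:ℝ)) := by
    have h := (exp_neg_integrableOn_Ioi 0 (zero_lt_one)).const_mul C
    simpa [IntegrableOn] using h
  refine hg.integrable.mono' ?_ ?_
  · exact ((kernel_cont d n t₀ t P b a).comp (Continuous.prodMk_right x)).aestronglyMeasurable
  · refine (ae_restrict_iff' measurableSet_Ioi).2 (Filter.Eventually.of_forall fun u hu => ?_)
    exact hC x le_rfl u (le_of_lt hu)

lemma kernel_tendsto (d n : ℕ) (hd : 1 ≤ d) (hn : 0 < n) (t₀ t : ℝ)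
    (ht₀ : 0 < t₀) (ht : 0 < t) (P : Polynomial ℂ) (b a : ℂ) (x : ℝ) :
    Filter.Tendsto (fun u : ℝ => P.eval (b * u) * kerE d n t₀ t a x u)
      Filter.atTop (nhds 0) := by
  obtain ⟨C, hC0, hC⟩ := kernel_bound d n hd hn t₀ t ht₀ ht P b a |x| (abs_nonneg x)
  have h : Filter.Tendsto (fun u : ℝ => Real.exp (-u)) Filter.atTop (nhds 0) :=
    Real.tendsto_exp_atBot.comp tendsto_neg_atTop_atBot
  exact squeeze_zero_norm' (Filter.eventually_atTop.2 ⟨0, fun u hu => hC x le_rfl u hu⟩)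
    (by simpa using h.const_mul C)

lemma kernel_hasDerivAt (d n : ℕ) (t₀ t : ℝ) (P : Polynomial ℂ) (b a : ℂ) (x u : ℝ) :
    HasDerivAt (fun u : ℝ => P.eval (b * u) * kerE d n t₀ t a x u)
      ((b * (Polynomial.derivative P).eval (b * u)
        + P.eval (b * u) * (-((n : ℂ) / (t₀ : ℂ)) * (a * x + t * (u : ℂ) ^ d)))
        * kerE d n t₀ t a x u) u := by
  have hD : ((d : ℂ) + 1) ≠ 0 := Nat.cast_add_one_ne_zero d
  set c : ℂ := ((n : ℂ) / (t₀ : ℂ)) with hc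
  have h1 : HasDerivAt (fun w : ℂ => P.eval (b * w)) ((Polynomial.derivative P).eval (b * u) * (b * 1)) (u : ℂ) := by
    exact HasDerivAt.comp (u : ℂ) (Polynomial.hasDerivAt P (b * (u:ℂ)))
      ((hasDerivAt_id ((u : ℝ) : ℂ)).const_mul b)
  have t1 : HasDerivAt (fun w : ℂ => a * w * (x : ℂ)) ((a * 1) * (x : ℂ)) (u : ℂ) :=
    ((hasDerivAt_id ((u : ℝ) : ℂ)).const_mul a).mul_const (x : ℂ)
  have t2 : HasDerivAt (fun w : ℂ => (t : ℂ) * w ^ (d + 1) / ((d : ℂ) + 1))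
      ((t : ℂ) * ((d + 1 : ℕ) * (u : ℂ) ^ d) / ((d : ℂ) + 1)) (u : ℂ) :=
    ((hasDerivAt_pow (d + 1) ((u : ℝ) : ℂ)).const_mul (t : ℂ)).div_const ((d : ℂ) + 1)
  have t3 : HasDerivAt (fun w : ℂ =>
      -c * (a * w * (x : ℂ) + (t : ℂ) * w ^ (d + 1) / ((d : ℂ) + 1)
        - (t : ℂ) * (x : ℂ) ^ (d + 1) / ((d : ℂ) + 1)))
      (-c * ((a * 1) * (x : ℂ) + (t : ℂ) * ((d + 1 : ℕ) * (u : ℂ) ^ d) / ((d : ℂ) + 1))) (u : ℂ) :=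
    ((t1.add t2).sub_const _).const_mul (-c)
  have hexp := t3.cexp
  have hF := h1.mul hexp
  have final := hF.comp_ofReal
  convert final using 1
  · rfl
  simp only [kerE, ← hc]
  push_cast
  field_simp

lemma kernel_integral_deriv (d n : ℕ) (hd : 1 ≤ d) (hn : 0 < n) (t₀ t : ℝ)
    (ht₀ : 0 < t₀) (ht : 0 < t) (P : Polynomial ℂ) (b a : ℂ) (hb : b ≠ 0) (x : ℝ) :
    ∫ u in Set.Ioi (0:ℝ),
      (b * (Polynomial.derivative P).eval (b * u)
        + P.eval (b * u) * (-((n : ℂ) / (t₀ : ℂ)) * (a * x + t * (u : ℂ) ^ d)))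
        * kerE d n t₀ t a x u
      = - (P.eval 0 * kerE d n t₀ t a x 0) := by
  set c : ℂ := ((n : ℂ) / (t₀ : ℂ)) with hc
  set R : Polynomial ℂ := Polynomial.C b * Polynomial.derivative P
      + Polynomial.C (-(c * a * x)) * P
      + Polynomial.C (-(c * t) / b ^ d) * (Polynomial.X ^ d * P) with hR
  have hfun : (fun u : ℝ =>
      (b * (Polynomial.derivative P).eval (b * u)
        + P.eval (b * u) * (-c * (a * x + t * (u : ℂ) ^ d))) * kerE d n t₀ t a x u)
      = fun u : ℝ => R.eval (b * u) * kerE d n t₀ t a x u := by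
    funext u
    rw [hR]
    simp only [Polynomial.eval_add, Polynomial.eval_mul, Polynomial.eval_C,
      Polynomial.eval_pow, Polynomial.eval_X]
    rw [mul_pow]
    have hbd : (b : ℂ) ^ d ≠ 0 := pow_ne_zero d hb
    field_simp
    ring
  have hint : IntegrableOn
      (fun u : ℝ => (b * (Polynomial.derivative P).eval (b * u)
        + P.eval (b * u) * (-c * (a * x + t * (u : ℂ) ^ d))) * kerE d n t₀ t a x u)
      (Set.Ioi (0:ℝ)) := by
    rw [hfun]
    exact kernel_integrableOn d n hd hn t₀ t ht₀ ht R b a x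
  have h := integral_Ioi_of_hasDerivAt_of_tendsto
    (f := fun u : ℝ => P.eval (b * u) * kerE d n t₀ t a x u)
    (f' := fun u : ℝ => (b * (Polynomial.derivative P).eval (b * u)
        + P.eval (b * u) * (-c * (a * x + t * (u : ℂ) ^ d))) * kerE d n t₀ t a x u)
    (m := 0) (a := 0)
    (((kernel_cont d n t₀ t P b a).comp (Continuous.prodMk_right x)).continuousWithinAt)
    (fun u _ => kernel_hasDerivAt d n t₀ t P b a x u)
    hint
    (kernel_tendsto d n hd hn t₀ t ht₀ ht P b a x)
  rw [h]
  norm_num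

lemma omC_ne (d : ℕ) : omC d ≠ 0 := Complex.exp_ne_zero _
lemma alphaC_ne (d : ℕ) : alphaC d ≠ 0 := Complex.exp_ne_zero _

lemma alphaC_pow (d : ℕ) : alphaC d ^ (d + 1) = -1 := by
  have hD : ((d : ℂ) + 1) ≠ 0 := Nat.cast_add_one_ne_zero d
  rw [alphaC, ← Complex.exp_nat_mul]
  have : ((d + 1 : ℕ) : ℂ) * (↑Real.pi * Complex.I / ((d : ℂ) + 1)) = ↑Real.pi * Complex.I := by
    push_cast
    field_simp
  rw [this, Complex.exp_pi_mul_I]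

lemma omC_pow (d : ℕ) : omC d ^ (d + 1) = 1 := by
  have hD : ((d : ℂ) + 1) ≠ 0 := Nat.cast_add_one_ne_zero d
  rw [omC, ← Complex.exp_nat_mul]
  have : ((d + 1 : ℕ) : ℂ) * (2 * ↑Real.pi * Complex.I / ((d : ℂ) + 1)) = 2 * ↑Real.pi * Complex.I := by
    push_cast
    field_simp
  rw [this, Complex.exp_two_pi_mul_I]

lemma omC_zpow_pow (d : ℕ) (ℓ : ℕ) : (omC d ^ (-(ℓ : ℤ))) ^ (d + 1) = 1 := by
  rw [← zpow_natCast (omC d ^ (-(ℓ : ℤ))) (d + 1), ← zpow_mul, mul_comm, zpow_mul,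
    zpow_natCast, omC_pow, one_zpow]

lemma bplus_pow (d : ℕ) (ℓ : ℕ) : (omC d ^ (-(ℓ : ℤ)) * alphaC d) ^ (d + 1) = -1 := by
  rw [mul_pow, omC_zpow_pow, alphaC_pow, one_mul]

lemma bminus_pow (d : ℕ) (ℓ : ℕ) : (omC d ^ (-(ℓ : ℤ)) * (alphaC d)⁻¹) ^ (d + 1) = -1 := by
  rw [mul_pow, omC_zpow_pow, inv_pow, alphaC_pow, one_mul]
  norm_num

lemma beta_bplus (d : ℕ) (ℓ : ℕ) : alphaC d = omC d ^ ℓ * (omC d ^ (-(ℓ : ℤ)) * alphaC d) := by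
  rw [← mul_assoc, ← zpow_natCast (omC d) ℓ, ← zpow_add₀ (omC_ne d)]
  simp

lemma beta_bminus (d : ℕ) (ℓ : ℕ) :
    (alphaC d)⁻¹ = omC d ^ ℓ * (omC d ^ (-(ℓ : ℤ)) * (alphaC d)⁻¹) := by
  rw [← mul_assoc, ← zpow_natCast (omC d) ℓ, ← zpow_add₀ (omC_ne d)]
  simp

set_option maxHeartbeats 1000000 in
lemma sign_integral (d n : ℕ) (hd : 1 ≤ d) (hn : 0 < n) (t₀ t : ℝ) (ht₀ : 0 < t₀) (ht : 0 < t)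
    (G : Polynomial ℂ) (β b e : ℂ) (hb : b ^ (d + 1) = -1) (hb0 : b ≠ 0) (heb : e = β * b)
    (x : ℝ) :
    (t₀ : ℂ) * (e * ∫ u in Set.Ioi (0:ℝ),
        (Polynomial.derivative G).eval (b * u) * kerE d n t₀ t e x u)
      - (n : ℂ) * ((β * x) * (e * ∫ u in Set.Ioi (0:ℝ),
          G.eval (b * u) * kerE d n t₀ t e x u))
      + (n : ℂ) * t * (e * ∫ u in Set.Ioi (0:ℝ),
          (Polynomial.X ^ d * G).eval (b * u) * kerE d n t₀ t e x u)
    = (t₀ : ℂ) * β * (-(G.eval 0 * kerE d n t₀ t e x 0)) := by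
  have hint1 := kernel_integrableOn d n hd hn t₀ t ht₀ ht (Polynomial.derivative G) b e x
  have hint2 := kernel_integrableOn d n hd hn t₀ t ht₀ ht G b e x
  have hint3 := kernel_integrableOn d n hd hn t₀ t ht₀ ht (Polynomial.X ^ d * G) b e x
  have ht₀' : (t₀ : ℂ) ≠ 0 := Complex.ofReal_ne_zero.2 ht₀.ne'
  have h1 : (t₀ : ℂ) * ((n : ℂ) / (t₀ : ℂ)) = (n : ℂ) := by
    field_simp
  have hA : Integrable (fun u : ℝ => ((t₀ : ℂ) * e) *
      ((Polynomial.derivative G).eval (b * u) * kerE d n t₀ t e x u))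
      (volume.restrict (Set.Ioi (0:ℝ))) := hint1.const_mul _
  have hB : Integrable (fun u : ℝ => ((n : ℂ) * (β * x) * e) *
      (G.eval (b * u) * kerE d n t₀ t e x u))
      (volume.restrict (Set.Ioi (0:ℝ))) := hint2.const_mul _
  have hC : Integrable (fun u : ℝ => ((n : ℂ) * t * e) *
      ((Polynomial.X ^ d * G).eval (b * u) * kerE d n t₀ t e x u))
      (volume.restrict (Set.Ioi (0:ℝ))) := hint3.const_mul _
  have hAB : Integrable (fun u : ℝ =>
      ((t₀ : ℂ) * e) * ((Polynomial.derivative G).eval (b * u) * kerE d n t₀ t e x u)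
        - ((n : ℂ) * (β * x) * e) * (G.eval (b * u) * kerE d n t₀ t e x u))
      (volume.restrict (Set.Ioi (0:ℝ))) := hA.sub hB
  have key : ((t₀ : ℂ) * e) * (∫ u in Set.Ioi (0:ℝ),
        (Polynomial.derivative G).eval (b * u) * kerE d n t₀ t e x u)
      - ((n : ℂ) * (β * x) * e) * (∫ u in Set.Ioi (0:ℝ),
          G.eval (b * u) * kerE d n t₀ t e x u)
      + ((n : ℂ) * t * e) * (∫ u in Set.Ioi (0:ℝ),
          (Polynomial.X ^ d * G).eval (b * u) * kerE d n t₀ t e x u)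
      = (t₀ : ℂ) * β * (-(G.eval 0 * kerE d n t₀ t e x 0)) := by
    rw [← integral_const_mul, ← integral_const_mul, ← integral_const_mul,
      ← integral_sub hA hB, ← integral_add hAB hC]
    have step : ∫ u in Set.Ioi (0:ℝ),
        (((t₀ : ℂ) * e) * ((Polynomial.derivative G).eval (b * u) * kerE d n t₀ t e x u)
          - ((n : ℂ) * (β * x) * e) * (G.eval (b * u) * kerE d n t₀ t e x u)
          + ((n : ℂ) * t * e) * ((Polynomial.X ^ d * G).eval (b * u) * kerE d n t₀ t e x u))
        = ∫ u in Set.Ioi (0:ℝ), ((t₀ : ℂ) * β) *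
          ((b * (Polynomial.derivative G).eval (b * u)
            + G.eval (b * u) * (-((n : ℂ) / (t₀ : ℂ)) * (e * x + t * (u : ℂ) ^ d)))
            * kerE d n t₀ t e x u) := by
      refine integral_congr_ae (Filter.Eventually.of_forall fun u => ?_)
      simp only [Polynomial.eval_mul, Polynomial.eval_pow, Polynomial.eval_X, mul_pow]
      subst heb
      linear_combination
        ((β * β * (x : ℂ) * b * G.eval (b * (u : ℂ)) * kerE d n t₀ t (β * b) x u)
          + ((t : ℂ) * β * ((u : ℂ)) ^ d * G.eval (b * (u : ℂ)) * kerE d n t₀ t (β * b) x u)) * h1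
        + ((n : ℂ) * (t : ℂ) * β * ((u : ℂ)) ^ d * G.eval (b * (u : ℂ))
            * kerE d n t₀ t (β * b) x u) * hb
    rw [step, integral_const_mul,
      kernel_integral_deriv d n hd hn t₀ t ht₀ ht G b e hb0 x]
  linear_combination key

lemma split_integral (d n : ℕ) (hd : 1 ≤ d) (hn : 0 < n) (t₀ t : ℝ) (ht₀ : 0 < t₀) (ht : 0 < t)
    (v c₁ c₂ : ℂ) (Q₁ Q₂ : Polynomial ℂ) (b₁ b₂ a₁ a₂ : ℂ) (x : ℝ) :
    ∫ u in Set.Ioi (0:ℝ), v * (c₁ * Q₁.eval (b₁ * u) * kerE d n t₀ t a₁ x u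
        - c₂ * Q₂.eval (b₂ * u) * kerE d n t₀ t a₂ x u)
      = (v * c₁) * (∫ u in Set.Ioi (0:ℝ), Q₁.eval (b₁ * u) * kerE d n t₀ t a₁ x u)
        - (v * c₂) * (∫ u in Set.Ioi (0:ℝ), Q₂.eval (b₂ * u) * kerE d n t₀ t a₂ x u) := by
  have h1 := kernel_integrableOn d n hd hn t₀ t ht₀ ht Q₁ b₁ a₁ x
  have h2 := kernel_integrableOn d n hd hn t₀ t ht₀ ht Q₂ b₂ a₂ x
  rw [← integral_const_mul, ← integral_const_mul, ← integral_sub (h1.const_mul _) (h2.const_mul _)]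
  exact integral_congr_ae (Filter.Eventually.of_forall fun u => by ring)

lemma kerE_zero_eq (d n : ℕ) (t₀ t : ℝ) (a a' : ℂ) (x : ℝ) :
    kerE d n t₀ t a x 0 = kerE d n t₀ t a' x 0 := by
  simp [kerE]

set_option maxHeartbeats 1000000 in
lemma inner_zero (d n : ℕ) (hd : 1 ≤ d) (hn : 0 < n) (t₀ t : ℝ) (ht₀ : 0 < t₀) (ht : 0 < t)
    (F G : Polynomial ℂ) (ℓ : ℕ) (x : ℝ) :
    (t₀ : ℂ) * (∫ u in Set.Ioi (0:ℝ), F.eval (omC d ^ ℓ * x) *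
        (alphaC d * (Polynomial.derivative G).eval (omC d ^ (-(ℓ:ℤ)) * alphaC d * u)
            * kerE d n t₀ t (alphaC d) x u
          - (alphaC d)⁻¹ * (Polynomial.derivative G).eval (omC d ^ (-(ℓ:ℤ)) * (alphaC d)⁻¹ * u)
            * kerE d n t₀ t (alphaC d)⁻¹ x u))
      - (n : ℂ) * (∫ u in Set.Ioi (0:ℝ), (Polynomial.X * F).eval (omC d ^ ℓ * x) *
        (alphaC d * G.eval (omC d ^ (-(ℓ:ℤ)) * alphaC d * u) * kerE d n t₀ t (alphaC d) x u
          - (alphaC d)⁻¹ * G.eval (omC d ^ (-(ℓ:ℤ)) * (alphaC d)⁻¹ * u)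
            * kerE d n t₀ t (alphaC d)⁻¹ x u))
      + (n : ℂ) * t * (∫ u in Set.Ioi (0:ℝ), F.eval (omC d ^ ℓ * x) *
        (alphaC d * (Polynomial.X ^ d * G).eval (omC d ^ (-(ℓ:ℤ)) * alphaC d * u)
            * kerE d n t₀ t (alphaC d) x u
          - (alphaC d)⁻¹ * (Polynomial.X ^ d * G).eval (omC d ^ (-(ℓ:ℤ)) * (alphaC d)⁻¹ * u)
            * kerE d n t₀ t (alphaC d)⁻¹ x u)) = 0 := by
  have he : (Polynomial.X * F).eval (omC d ^ ℓ * (x:ℂ))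
      = (omC d ^ ℓ * (x:ℂ)) * F.eval (omC d ^ ℓ * (x:ℂ)) := by
    simp
  simp only [he]
  set α := alphaC d with hα
  set β := omC d ^ ℓ with hβ
  set bp := omC d ^ (-(ℓ:ℤ)) * alphaC d with hbp
  set bm := omC d ^ (-(ℓ:ℤ)) * (alphaC d)⁻¹ with hbm
  set v := F.eval (β * (x:ℂ)) with hv
  have hbp0 : bp ≠ 0 := mul_ne_zero (zpow_ne_zero _ (omC_ne d)) (alphaC_ne d)
  have hbm0 : bm ≠ 0 := mul_ne_zero (zpow_ne_zero _ (omC_ne d)) (inv_ne_zero (alphaC_ne d))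
  rw [split_integral d n hd hn t₀ t ht₀ ht v α α⁻¹ _ _ bp bm α α⁻¹ x,
    split_integral d n hd hn t₀ t ht₀ ht (β * (x:ℂ) * v) α α⁻¹ _ _ bp bm α α⁻¹ x,
    split_integral d n hd hn t₀ t ht₀ ht v α α⁻¹ _ _ bp bm α α⁻¹ x]
  have hSp := sign_integral d n hd hn t₀ t ht₀ ht G β bp α (bplus_pow d ℓ) hbp0
    (beta_bplus d ℓ) x
  have hSm := sign_integral d n hd hn t₀ t ht₀ ht G β bm α⁻¹ (bminus_pow d ℓ) hbm0
    (beta_bminus d ℓ) x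
  have hk : kerE d n t₀ t α x 0 = kerE d n t₀ t α⁻¹ x 0 := kerE_zero_eq d n t₀ t _ _ x
  linear_combination v * hSp - v * hSm - ((t₀ : ℂ) * β * G.eval 0 * v) * hk

lemma kerE_cont (d n : ℕ) (t₀ t : ℝ) (a : ℂ) :
    Continuous fun p : ℝ × ℝ => kerE d n t₀ t a p.1 p.2 := by
  unfold kerE
  apply Complex.continuous_exp.comp
  have h1 : Continuous fun p : ℝ × ℝ => ((p.1 : ℝ) : ℂ) :=
    Complex.continuous_ofReal.comp continuous_fst
  have h2 : Continuous fun p : ℝ × ℝ => ((p.2 : ℝ) : ℂ) :=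
    Complex.continuous_ofReal.comp continuous_snd
  continuity

set_option maxHeartbeats 1000000 in
lemma outer_integrable (d n : ℕ) (hd : 1 ≤ d) (hn : 0 < n) (t₀ t xhat : ℝ)
    (ht₀ : 0 < t₀) (ht : 0 < t) (hxh : 0 < xhat)
    (F Q₁ Q₂ : Polynomial ℂ) (w c₁ c₂ b₁ b₂ a₁ a₂ : ℂ) :
    IntervalIntegrable (fun x : ℝ => ∫ u in Set.Ioi (0:ℝ),
      F.eval (w * x) * (c₁ * Q₁.eval (b₁ * u) * kerE d n t₀ t a₁ x u
        - c₂ * Q₂.eval (b₂ * u) * kerE d n t₀ t a₂ x u)) volume 0 xhat := by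
  obtain ⟨CF, hCF0, hCF⟩ := polyBound F w
  obtain ⟨C₁, hC₁0, hC₁⟩ := kernel_bound d n hd hn t₀ t ht₀ ht Q₁ b₁ a₁ xhat hxh.le
  obtain ⟨C₂, hC₂0, hC₂⟩ := kernel_bound d n hd hn t₀ t ht₀ ht Q₂ b₂ a₂ xhat hxh.le
  set K : ℝ := CF * Real.exp ((F.natDegree : ℝ) * xhat) * (‖c₁‖ * C₁ + ‖c₂‖ * C₂) with hK
  have hK0 : 0 ≤ K := by positivity
  have hgint : Integrable (fun u : ℝ => K * Real.exp (-u))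
      (volume.restrict (Set.Ioi (0:ℝ))) := by
    have h := (exp_neg_integrableOn_Ioi 0 zero_lt_one).const_mul K
    simpa using h
  rw [intervalIntegrable_iff_integrableOn_Ioc_of_le hxh.le]
  apply Measure.integrableOn_of_bounded (M := K * ∫ u in Set.Ioi (0:ℝ), Real.exp (-u))
    measure_Ioc_lt_top.ne
  · -- measurability
    have hFc : Continuous fun p : ℝ × ℝ => F.eval (w * (p.1 : ℂ)) :=
      F.continuous.comp (continuous_const.mul (Complex.continuous_ofReal.comp continuous_fst))
    have hQ1 : Continuous fun p : ℝ × ℝ => Q₁.eval (b₁ * (p.2 : ℂ)) :=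
      Q₁.continuous.comp (continuous_const.mul (Complex.continuous_ofReal.comp continuous_snd))
    have hQ2 : Continuous fun p : ℝ × ℝ => Q₂.eval (b₂ * (p.2 : ℂ)) :=
      Q₂.continuous.comp (continuous_const.mul (Complex.continuous_ofReal.comp continuous_snd))
    have hcont : Continuous fun p : ℝ × ℝ =>
        F.eval (w * (p.1 : ℂ)) * (c₁ * Q₁.eval (b₁ * (p.2 : ℂ)) * kerE d n t₀ t a₁ p.1 p.2
          - c₂ * Q₂.eval (b₂ * (p.2 : ℂ)) * kerE d n t₀ t a₂ p.1 p.2) :=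
      hFc.mul (((( continuous_const.mul hQ1).mul (kerE_cont d n t₀ t a₁))).sub
        (((continuous_const.mul hQ2).mul (kerE_cont d n t₀ t a₂))))
    exact (hcont.stronglyMeasurable.integral_prod_right'
      (ν := volume.restrict (Set.Ioi (0:ℝ)))).aestronglyMeasurable
  · refine (ae_restrict_iff' measurableSet_Ioc).2 (Filter.Eventually.of_forall fun x hx => ?_)
    have hx0 : (0:ℝ) ≤ x := hx.1.le
    have hxx : |x| ≤ xhat := by rw [abs_of_nonneg hx0]; exact hx.2
    have hFb : ‖F.eval (w * (x : ℂ))‖ ≤ CF * Real.exp ((F.natDegree : ℝ) * xhat) := by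
      refine (hCF x hx0).trans ?_
      have : (F.natDegree : ℝ) * x ≤ (F.natDegree : ℝ) * xhat :=
        mul_le_mul_of_nonneg_left hx.2 (Nat.cast_nonneg _)
      exact mul_le_mul_of_nonneg_left (Real.exp_le_exp.2 this) hCF0
    have hpt : ∀ᵐ u : ℝ ∂(volume.restrict (Set.Ioi (0:ℝ))),
        ‖F.eval (w * (x : ℂ)) * (c₁ * Q₁.eval (b₁ * u) * kerE d n t₀ t a₁ x u
          - c₂ * Q₂.eval (b₂ * u) * kerE d n t₀ t a₂ x u)‖ ≤ K * Real.exp (-u) := by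
      refine (ae_restrict_iff' measurableSet_Ioi).2 (Filter.Eventually.of_forall fun u hu => ?_)
      have hu0 : (0:ℝ) ≤ u := le_of_lt hu
      have h1 : ‖c₁ * Q₁.eval (b₁ * (u:ℂ)) * kerE d n t₀ t a₁ x u‖ ≤ ‖c₁‖ * (C₁ * Real.exp (-u)) := by
        rw [mul_assoc, norm_mul]
        exact mul_le_mul_of_nonneg_left (hC₁ x hxx u hu0) (norm_nonneg c₁)
      have h2 : ‖c₂ * Q₂.eval (b₂ * (u:ℂ)) * kerE d n t₀ t a₂ x u‖ ≤ ‖c₂‖ * (C₂ * Real.exp (-u)) := by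
        rw [mul_assoc, norm_mul]
        exact mul_le_mul_of_nonneg_left (hC₂ x hxx u hu0) (norm_nonneg c₂)
      rw [norm_mul]
      have hsub : ‖c₁ * Q₁.eval (b₁ * (u:ℂ)) * kerE d n t₀ t a₁ x u
          - c₂ * Q₂.eval (b₂ * (u:ℂ)) * kerE d n t₀ t a₂ x u‖
          ≤ (‖c₁‖ * C₁ + ‖c₂‖ * C₂) * Real.exp (-u) := by
        refine (norm_sub_le _ _).trans ?_
        nlinarith [Real.exp_pos (-u)]
      calc ‖F.eval (w * (x : ℂ))‖ * ‖c₁ * Q₁.eval (b₁ * (u:ℂ)) * kerE d n t₀ t a₁ x u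
            - c₂ * Q₂.eval (b₂ * (u:ℂ)) * kerE d n t₀ t a₂ x u‖
          ≤ (CF * Real.exp ((F.natDegree : ℝ) * xhat)) * ((‖c₁‖ * C₁ + ‖c₂‖ * C₂) * Real.exp (-u)) := by
            refine mul_le_mul hFb hsub (norm_nonneg _) (by positivity)
        _ = K * Real.exp (-u) := by rw [hK]; ring
    calc ‖∫ u in Set.Ioi (0:ℝ), F.eval (w * (x:ℂ)) * (c₁ * Q₁.eval (b₁ * u) * kerE d n t₀ t a₁ x u
          - c₂ * Q₂.eval (b₂ * u) * kerE d n t₀ t a₂ x u)‖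
        ≤ ∫ u in Set.Ioi (0:ℝ), K * Real.exp (-u) := norm_integral_le_of_norm_le hgint hpt
      _ = K * ∫ u in Set.Ioi (0:ℝ), Real.exp (-u) := integral_const_mul _ _

lemma kerE_eq (d n : ℕ) (t₀ t : ℝ) (a : ℂ) (x u : ℝ) :
    Complex.exp (-((n : ℂ) / (t₀ : ℂ)) *
      (a * (u : ℂ) * (x : ℂ) + (t : ℂ) * (u : ℂ) ^ (d + 1) / ((d : ℂ) + 1)
        - (t : ℂ) * (x : ℂ) ^ (d + 1) / ((d : ℂ) + 1))) = kerE d n t₀ t a x u := rfl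


/-- The sesquilinear form
`⟨f, g⟩ = ∑_{ℓ=0}^{d} ∫_0^{x̂} ∫_0^∞ f(ω^ℓ x) ·
  [ α·ḡ(ω^{-ℓ}αu)·e^{-(n/t₀)(αux + t u^{d+1}/(d+1) - t x^{d+1}/(d+1))}
  - α^{-1}·ḡ(ω^{-ℓ}α^{-1}u)·e^{-(n/t₀)(α^{-1}ux + t u^{d+1}/(d+1) - t x^{d+1}/(d+1))} ] du dx`. -/
noncomputable def sesq (d n : ℕ) (t₀ t xhat : ℝ) (f g : Polynomial ℂ) : ℂ :=
  ∑ ℓ ∈ Finset.range (d + 1),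
    ∫ x in (0 : ℝ)..xhat,
      ∫ u in Set.Ioi (0 : ℝ),
        Polynomial.eval (omC d ^ ℓ * (x : ℂ)) f *
          (alphaC d *
              Polynomial.eval (omC d ^ (-(ℓ : ℤ)) * alphaC d * (u : ℂ))
                (g.map (starRingEnd ℂ)) *
              Complex.exp (-((n : ℂ) / (t₀ : ℂ)) *
                (alphaC d * (u : ℂ) * (x : ℂ) + (t : ℂ) * (u : ℂ) ^ (d + 1) / ((d : ℂ) + 1)
                  - (t : ℂ) * (x : ℂ) ^ (d + 1) / ((d : ℂ) + 1)))
            - (alphaC d)⁻¹ *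
              Polynomial.eval (omC d ^ (-(ℓ : ℤ)) * (alphaC d)⁻¹ * (u : ℂ))
                (g.map (starRingEnd ℂ)) *
              Complex.exp (-((n : ℂ) / (t₀ : ℂ)) *
                ((alphaC d)⁻¹ * (u : ℂ) * (x : ℂ) + (t : ℂ) * (u : ℂ) ^ (d + 1) / ((d : ℂ) + 1)
                  - (t : ℂ) * (x : ℂ) ^ (d + 1) / ((d : ℂ) + 1))))

set_option maxHeartbeats 2000000 in
/-- The structure relation `t₀⟨f, g'⟩ - n⟨X·f, g⟩ + n·t⟨f, X^d·g⟩ = 0`. -/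
theorem stmt17 (d : ℕ) (hd : 2 ≤ d) (n : ℕ) (hn : 0 < n) (t₀ t xhat : ℝ)
    (ht₀ : 0 < t₀) (ht : 0 < t) (hx : 0 < xhat) (f g : Polynomial ℂ) :
    (t₀ : ℂ) * sesq d n t₀ t xhat f (Polynomial.derivative g)
      - (n : ℂ) * sesq d n t₀ t xhat (Polynomial.X * f) g
      + (n : ℂ) * (t : ℂ) * sesq d n t₀ t xhat f (Polynomial.X ^ d * g) = 0 := by
  have hd1 : 1 ≤ d := le_trans (by norm_num) hd
  set G : Polynomial ℂ := g.map (starRingEnd ℂ) with hG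
  simp only [sesq, kerE_eq, ← Polynomial.derivative_map, Polynomial.map_mul,
    Polynomial.map_pow, Polynomial.map_X, ← hG]
  rw [Finset.mul_sum, Finset.mul_sum, Finset.mul_sum, ← Finset.sum_sub_distrib,
    ← Finset.sum_add_distrib]
  refine Finset.sum_eq_zero fun ℓ _ => ?_
  have hA := outer_integrable d n hd1 hn t₀ t xhat ht₀ ht hx f
    (Polynomial.derivative G) (Polynomial.derivative G) (omC d ^ ℓ) (alphaC d) (alphaC d)⁻¹
    (omC d ^ (-(ℓ:ℤ)) * alphaC d) (omC d ^ (-(ℓ:ℤ)) * (alphaC d)⁻¹) (alphaC d) (alphaC d)⁻¹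
  have hB := outer_integrable d n hd1 hn t₀ t xhat ht₀ ht hx (Polynomial.X * f)
    G G (omC d ^ ℓ) (alphaC d) (alphaC d)⁻¹
    (omC d ^ (-(ℓ:ℤ)) * alphaC d) (omC d ^ (-(ℓ:ℤ)) * (alphaC d)⁻¹) (alphaC d) (alphaC d)⁻¹
  have hC := outer_integrable d n hd1 hn t₀ t xhat ht₀ ht hx f
    (Polynomial.X ^ d * G) (Polynomial.X ^ d * G) (omC d ^ ℓ) (alphaC d) (alphaC d)⁻¹
    (omC d ^ (-(ℓ:ℤ)) * alphaC d) (omC d ^ (-(ℓ:ℤ)) * (alphaC d)⁻¹) (alphaC d) (alphaC d)⁻¹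
  rw [← intervalIntegral.integral_const_mul, ← intervalIntegral.integral_const_mul,
    ← intervalIntegral.integral_const_mul,
    ← intervalIntegral.integral_sub (hA.const_mul _) (hB.const_mul _),
    ← intervalIntegral.integral_add ((hA.const_mul _).sub (hB.const_mul _)) (hC.const_mul _)]
  have h0 : ∫ x in (0:ℝ)..xhat, (0:ℂ) = 0 := intervalIntegral.integral_zero
  rw [← h0]
  apply intervalIntegral.integral_congr
  intro x _
  exact inner_zero d n hd1 hn t₀ t ht₀ ht f G ℓ x
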